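/- arXiv:1703.05433 — 3 statements merged into one kernel-verified Lean document; each statement's English description precedes it below -/
import Mathlib

section
/- Let P = {x ∈ ℝ^m : α_i x ≥ 0 for all i ∈ ι} for a finite family of affine maps α_i : ℝ^m → ℝ, and suppose v ∈ ℝ^m spans an infinite ray in P. Then the saturation of P_v under all translations along v is the closed polyhedron cut out by the v-invariant inequalities: P_v + ℝ•v = {x ∈ ℝ^m : α_i x ≥ 0 for every i with (α_i).linear v = 0}. In particular, P_v + ℝ•v is a closed subset of ℝ^m. -/
lemma affine_line_eval {m : ℕ} (α : (Fin m → ℝ) →ᵃ[ℝ] ℝ) (x v : Fin m → ℝ) (t : ℝ) :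
    α (x + t • v) = α x + t * α.linear v := by
  have : x + t • v = (t • v) +ᵥ x := by
    simp [vadd_eq_add, add_comm]
  rw [this, AffineMap.map_vadd, map_smul]
  simp [vadd_eq_add, smul_eq_mul, add_comm]

/-- If `P = {x : ℝ^m | ∀ i, α i x ≥ 0}` for a finite family of affine maps and
`v` spans an infinite ray in `P`, then the saturation of
`P_v = {x | ∀ i, α i x ≥ 0, and α j x > 0 whenever (α j).linear v ≠ 0}`
under all translations along `v` is the closed polyhedron cut out by the
`v`-invariant inequalities; in particular it is a closed subset of `ℝ^m`. -/
theorem Pv_saturation_eq_and_isClosed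
    {m : ℕ} {ι : Type*} [Finite ι]
    (α : ι → ((Fin m → ℝ) →ᵃ[ℝ] ℝ))
    (P : Set (Fin m → ℝ)) (hP : P = {x | ∀ i, 0 ≤ α i x})
    (v : Fin m → ℝ)
    (hray : ∃ p ∈ P, ∀ t : ℝ, 0 ≤ t → p + t • v ∈ P)
    (Pv : Set (Fin m → ℝ))
    (hPv : Pv = {x | (∀ i, 0 ≤ α i x) ∧ ∀ j, (α j).linear v ≠ 0 → 0 < α j x}) :
    {y | ∃ x ∈ Pv, ∃ t : ℝ, y = x + t • v} =
      {x | ∀ i, (α i).linear v = 0 → 0 ≤ α i x} ∧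
    IsClosed {y | ∃ x ∈ Pv, ∃ t : ℝ, y = x + t • v} := by
  subst hP hPv
  obtain ⟨p, hp, hpr⟩ := hray
  -- all linear parts are nonnegative on v
  have hc : ∀ j, 0 ≤ (α j).linear v := by
    intro j
    by_contra h
    push_neg at h
    set c := (α j).linear v with hcdef
    have ht : (0:ℝ) ≤ (α j p + 1) / (-c) := by
      have h1 : 0 ≤ α j p := hp j
      have : (0:ℝ) < -c := by linarith
      positivity
    have := hpr _ ht j
    rw [affine_line_eval, ← hcdef] at this
    have hne : c ≠ 0 := by linarith
    have hcc : ((α j p + 1) / (-c)) * c = -(α j p + 1) := by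
      rw [div_mul_eq_mul_div, mul_div_assoc, div_neg, div_self hne]; ring
    rw [hcc] at this
    linarith
  have key : {y | ∃ x ∈ {x | (∀ i, 0 ≤ α i x) ∧ ∀ j, (α j).linear v ≠ 0 → 0 < α j x},
      ∃ t : ℝ, y = x + t • v} = {x | ∀ i, (α i).linear v = 0 → 0 ≤ α i x} := by
    ext y
    constructor
    · rintro ⟨x, ⟨hx1, _⟩, t, rfl⟩ i hi
      rw [affine_line_eval, hi]
      simpa using hx1 i
    · intro hy
      obtain ⟨M, hM⟩ := Finite.exists_le (fun j : ι => (1 - α j y) / (α j).linear v)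
      refine ⟨y + M • v, ⟨?_, ?_⟩, -M, by rw [neg_smul]; abel⟩
      · intro i
        rw [affine_line_eval]
        rcases eq_or_lt_of_le (hc i) with h | h
        · rw [← h]; simpa using hy i h.symm
        · have := hM i
          have h2 : (1 - α i y) ≤ M * (α i).linear v := by
            rw [div_le_iff₀ h] at this
            linarith
          linarith
      · intro j hj
        have h : 0 < (α j).linear v := lt_of_le_of_ne (hc j) (Ne.symm hj)
        rw [affine_line_eval]
        have := hM j
        have h2 : (1 - α j y) ≤ M * (α j).linear v := by
          rw [div_le_iff₀ h] at this
          linarith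
        linarith
  refine ⟨key, ?_⟩
  rw [key]
  have : {x | ∀ i, (α i).linear v = 0 → 0 ≤ α i x} =
      ⋂ i, {x | (α i).linear v = 0 → 0 ≤ α i x} := by
    ext x; simp
  rw [this]
  refine isClosed_iInter fun i => ?_
  by_cases h : (α i).linear v = 0
  · have : {x | (α i).linear v = 0 → 0 ≤ α i x} = {x | 0 ≤ α i x} := by
      ext x; simp [h]
    rw [this]
    exact isClosed_le continuous_const (AffineMap.continuous_of_finiteDimensional (α i))
  · have : {x : Fin m → ℝ | (α i).linear v = 0 → 0 ≤ α i x} = Set.univ := by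
      ext x; simp [h]
    rw [this]
    exact isClosed_univ
end

section
/- Let P = {x ∈ ℝ^m : α_i x ≥ 0 for all i ∈ ι} for a finite family of affine maps α_i : ℝ^m → ℝ (so P is complete, i.e. closed), and suppose a nonzero v ∈ ℝ^m spans an infinite ray in P. Then P/v is complete: the image π(P_v) of P_v under the canonical projection π : ℝ^m → ℝ^m ⧸ (ℝ ∙ v) onto the quotient by the line spanned by v is a closed subset of the quotient. -/
/-- If `P = {x : ℝ^m | ∀ i, α i x ≥ 0}` for a finite family of affine maps (so
`P` is complete, i.e. closed) and a nonzero `v` spans an infinite ray in `P`,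
then `P/v` is complete: the image of
`P_v = {x | ∀ i, α i x ≥ 0, and α j x > 0 whenever (α j).linear v ≠ 0}`
under the canonical projection `ℝ^m → ℝ^m ⧸ ℝ∙v` is closed. -/
theorem quotient_of_polytope_by_infinite_ray_isClosed
    {m : ℕ} {ι : Type*} [Finite ι]
    (α : ι → ((Fin m → ℝ) →ᵃ[ℝ] ℝ))
    (P : Set (Fin m → ℝ)) (hP : P = {x | ∀ i, 0 ≤ α i x})
    (v : Fin m → ℝ) (hv : v ≠ 0)
    (hray : ∃ p ∈ P, ∀ t : ℝ, 0 ≤ t → p + t • v ∈ P)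
    (Pv : Set (Fin m → ℝ))
    (hPv : Pv = {x | (∀ i, 0 ≤ α i x) ∧ ∀ j, (α j).linear v ≠ 0 → 0 < α j x}) :
    IsClosed ((Submodule.span ℝ {v}).mkQ '' Pv) := by
  classical
  set c : ι → ℝ := fun i => (α i).linear v with hc
  -- evaluation of affine maps along the ray
  have keyval : ∀ (i : ι) (x : Fin m → ℝ) (t : ℝ), α i (x + t • v) = α i x + t * c i := by
    intro i x t
    have : x + t • v = (t • v) +ᵥ x := by
      simp [vadd_eq_add, add_comm]
    rw [this, AffineMap.map_vadd]
    simp [hc, vadd_eq_add, add_comm, mul_comm]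
  -- Step 1: all c i ≥ 0
  have hcnn : ∀ i, 0 ≤ c i := by
    intro i
    by_contra h
    push_neg at h
    obtain ⟨p, hp, hr⟩ := hray
    rw [hP] at hr
    set t : ℝ := (α i p + 1) / (-(c i)) with ht
    have hden : 0 < -(c i) := by linarith
    have hp' : 0 ≤ α i p := by rw [hP] at hp; exact hp i
    have htnn : 0 ≤ t := div_nonneg (by linarith) hden.le
    have h2 := hr t htnn i
    rw [keyval] at h2
    have : t * c i = -(α i p + 1) := by
      field_simp [ht]
      rw [ht, div_mul_eq_mul_div, div_eq_iff hden.ne']; ring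
    rw [this] at h2
    linarith
  -- Step 2: the saturated set Q
  set Q : Set (Fin m → ℝ) := {x | ∀ i, c i = 0 → 0 ≤ α i x} with hQ
  set π := (Submodule.span ℝ {v}).mkQ with hπ
  have himg : π '' Pv = π '' Q := by
    apply Set.Subset.antisymm
    · apply Set.image_mono
      rw [hPv]
      intro x hx i _
      exact hx.1 i
    · rintro _ ⟨x, hx, rfl⟩
      -- find t with x + t • v ∈ Pv
      obtain ⟨t, ht⟩ := Finite.exists_le (fun i => (1 - α i x) / c i)
      refine ⟨x + t • v, ?_, ?_⟩
      · rw [hPv]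
        have hpos : ∀ i, c i ≠ 0 → 0 < α i (x + t • v) := by
          intro i hne
          have hci : 0 < c i := lt_of_le_of_ne (hcnn i) (Ne.symm hne)
          rw [keyval]
          have := ht i
          have h1 : 1 - α i x ≤ t * c i := by
            rw [div_le_iff₀ hci] at this
            linarith
          linarith
        refine ⟨fun i => ?_, fun j hj => hpos j (by simpa [hc] using hj)⟩
        by_cases hci : c i = 0
        · rw [keyval, hci, mul_zero, add_zero]
          exact hx i hci
        · exact (hpos i hci).le
      · have : π (x + t • v) = π x + π (t • v) := by simp
        rw [this]
        have : π (t • v) = 0 := by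
          rw [hπ, Submodule.mkQ_apply, Submodule.Quotient.mk_eq_zero]
          exact Submodule.smul_mem _ t (Submodule.mem_span_singleton_self v)
        rw [this, add_zero]
  rw [himg]
  -- Q is closed
  have hQclosed : IsClosed Q := by
    have : Q = ⋂ i, {x | c i = 0 → 0 ≤ α i x} := by
      ext x; simp [hQ, Set.mem_iInter]
    rw [this]
    apply isClosed_iInter
    intro i
    by_cases hci : c i = 0
    · have : {x | c i = 0 → 0 ≤ α i x} = (α i) ⁻¹' Set.Ici 0 := by
        ext x; simp [hci]
      rw [this]
      exact IsClosed.preimage ((α i).continuous_of_finiteDimensional) isClosed_Ici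
    · have : {x : Fin m → ℝ | c i = 0 → 0 ≤ α i x} = Set.univ := by
        ext x; simp [hci]
      rw [this]; exact isClosed_univ
  -- Q is saturated
  have hsat : π ⁻¹' (π '' Q) = Q := by
    apply Set.Subset.antisymm
    · rintro x hx
      obtain ⟨y, hy, hxy⟩ := hx
      have : x - y ∈ Submodule.span ℝ {v} := by
        simp only [hπ, Submodule.mkQ_apply] at hxy
        rw [Submodule.Quotient.eq] at hxy
        simpa using neg_mem hxy
      obtain ⟨t, ht⟩ := Submodule.mem_span_singleton.mp this
      have hx' : x = y + t • v := by
        have := ht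
        have : x = t • v + y := by
          rw [ht]; abel
        rw [this]; abel
      rw [hx']
      intro i hci
      rw [keyval, hci, mul_zero, add_zero]
      exact hy i hci
    · exact Set.subset_preimage_image π Q
  -- conclude via open map
  rw [← isOpen_compl_iff]
  have hopen : IsOpenMap π := Submodule.isOpenMap_mkQ _
  have hcompl : (π '' Q)ᶜ = π '' Qᶜ := by
    apply Set.Subset.antisymm
    · intro y hy
      obtain ⟨x, rfl⟩ := (Submodule.span ℝ {v}).mkQ_surjective y
      refine ⟨x, ?_, rfl⟩
      intro hxQ
      exact hy ⟨x, hxQ, rfl⟩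
    · rintro _ ⟨x, hx, rfl⟩ hmem
      exact hx (by rw [← hsat]; exact hmem)
  rw [hcompl]
  exact hopen _ hQclosed.isOpen_compl
end

section
/- Let P = {x ∈ ℝ^m : α_i x ≥ 0 for all i ∈ ι} for a finite family of affine maps α_i : ℝ^m → ℝ, and suppose v ∈ ℝ^m spans an infinite ray in P. Then P/v is defined by the projections of the v-invariant inequalities: (1) π(P_v) = π({x ∈ ℝ^m : α_i x ≥ 0 for every i with (α_i).linear v = 0}); and (2) for every i with (α_i).linear v = 0 there is a (unique) affine map β_i : ℝ^m ⧸ (ℝ ∙ v) → ℝ with β_i ∘ π = α_i, and π(P_v) = {y ∈ ℝ^m ⧸ (ℝ ∙ v) : β_i y ≥ 0 for every i with (α_i).linear v = 0}. -/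
/-- If `P = {x : ℝ^m | ∀ i, α i x ≥ 0}` for a finite family of affine maps and
`v` spans an infinite ray in `P`, then `P/v := π(P_v)` is defined by the
projections of the `v`-invariant inequalities, where
`π : ℝ^m → ℝ^m ⧸ ℝ∙v` is the canonical projection:
(1) `π(P_v)` equals the image under `π` of the polyhedron cut out by the
inequalities whose linear part annihilates `v`;
(2) each such `α i` descends to a unique affine map `β i` on the quotient, and
`π(P_v)` is cut out by the inequalities `β i ≥ 0`. -/
theorem quotient_polytope_defined_by_projected_inequalities
    {m : ℕ} {ι : Type*} [Finite ι]
    (α : ι → ((Fin m → ℝ) →ᵃ[ℝ] ℝ))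
    (P : Set (Fin m → ℝ)) (hP : P = {x | ∀ i, 0 ≤ α i x})
    (v : Fin m → ℝ)
    (hray : ∃ p ∈ P, ∀ t : ℝ, 0 ≤ t → p + t • v ∈ P)
    (Pv : Set (Fin m → ℝ))
    (hPv : Pv = {x | (∀ i, 0 ≤ α i x) ∧ ∀ j, (α j).linear v ≠ 0 → 0 < α j x}) :
    ((Submodule.span ℝ {v}).mkQ '' Pv =
        (Submodule.span ℝ {v}).mkQ ''
          {x | ∀ i, (α i).linear v = 0 → 0 ≤ α i x}) ∧
    (∀ i, (α i).linear v = 0 →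
      ∃! β : ((Fin m → ℝ) ⧸ Submodule.span ℝ {v}) →ᵃ[ℝ] ℝ,
        ∀ x, β ((Submodule.span ℝ {v}).mkQ x) = α i x) ∧
    (∀ β : ι → (((Fin m → ℝ) ⧸ Submodule.span ℝ {v}) →ᵃ[ℝ] ℝ),
      (∀ i, (α i).linear v = 0 →
        ∀ x, β i ((Submodule.span ℝ {v}).mkQ x) = α i x) →
      (Submodule.span ℝ {v}).mkQ '' Pv =
        {y | ∀ i, (α i).linear v = 0 → 0 ≤ β i y}) := by
  classical
  obtain ⟨p, hpP, hpray⟩ := hray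
  have hmap : ∀ (i : ι) (x : Fin m → ℝ) (t : ℝ),
      α i (x + t • v) = α i x + t * (α i).linear v := by
    intro i x t
    have h := (α i).map_vadd x (t • v)
    simp only [vadd_eq_add, map_smul, smul_eq_mul] at h
    rw [add_comm x (t • v), h]
    ring
  have hα : ∀ (i : ι) (x : Fin m → ℝ), α i x = (α i).linear x + α i 0 := by
    intro i x
    have h := (α i).map_vadd 0 x
    simpa [vadd_eq_add] using h
  -- positivity of slopes along the ray
  have hpos : ∀ j, (α j).linear v ≠ 0 → 0 < (α j).linear v := by
    intro j hj
    by_contra h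
    have hc : (α j).linear v < 0 := lt_of_le_of_ne (not_lt.mp h) hj
    have hp0 : 0 ≤ α j p := by
      rw [hP] at hpP; exact hpP j
    set t := (α j p + 1) / (-(α j).linear v) with htdef
    have ht : 0 ≤ t := div_nonneg (by linarith) (by linarith)
    have h2 := hpray t ht
    rw [hP] at h2
    have h3 := h2 j
    rw [hmap j p t] at h3
    have h4 : t * (α j).linear v = -(α j p + 1) := by
      rw [htdef]
      field_simp

    linarith
  -- shifting a point of Q into Pv along v
  have hshift : ∀ x : Fin m → ℝ, (∀ i, (α i).linear v = 0 → 0 ≤ α i x) →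
      ∃ t : ℝ, x + t • v ∈ Pv := by
    intro x hx
    haveI : Fintype ι := Fintype.ofFinite ι
    refine ⟨1 + ∑ j, max 0 (-(α j x) / (α j).linear v), ?_⟩
    set t := 1 + ∑ j, max 0 (-(α j x) / (α j).linear v) with htdef
    have hterm : ∀ j, -(α j x) / (α j).linear v < t := by
      intro j
      have h1 : max 0 (-(α j x) / (α j).linear v)
          ≤ ∑ k, max 0 (-(α k x) / (α k).linear v) :=
        Finset.single_le_sum (f := fun k => max 0 (-(α k x) / (α k).linear v))
          (fun k _ => le_max_left _ _) (Finset.mem_univ j)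
      have h2 := le_max_right 0 (-(α j x) / (α j).linear v)
      rw [htdef]; linarith
    have hstrict : ∀ j, (α j).linear v ≠ 0 → 0 < α j (x + t • v) := by
      intro j hj
      rw [hmap]
      have hcj := hpos j hj
      have h2 : -(α j x) < t * (α j).linear v := by
        have := (div_lt_iff₀ hcj).mp (hterm j)
        linarith
      linarith
    rw [hPv]
    refine ⟨?_, hstrict⟩
    intro i
    by_cases hiv : (α i).linear v = 0
    · rw [hmap, hiv]
      simpa using hx i hiv
    · exact (hstrict i hiv).le
  have hmkq : ∀ (x : Fin m → ℝ) (t : ℝ),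
      (Submodule.span ℝ {v}).mkQ (x + t • v) = (Submodule.span ℝ {v}).mkQ x := by
    intro x t
    rw [Submodule.mkQ_apply, Submodule.mkQ_apply, Submodule.Quotient.eq]
    simpa using Submodule.smul_mem _ t (Submodule.mem_span_singleton_self v)
  -- Part 1
  have part1 : (Submodule.span ℝ {v}).mkQ '' Pv =
      (Submodule.span ℝ {v}).mkQ '' {x | ∀ i, (α i).linear v = 0 → 0 ≤ α i x} := by
    apply Set.Subset.antisymm
    · apply Set.image_mono
      rw [hPv]
      intro x hx i _
      exact hx.1 i
    · rintro _ ⟨x, hx, rfl⟩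
      obtain ⟨t, htx⟩ := hshift x hx
      exact ⟨x + t • v, htx, hmkq x t⟩
  refine ⟨part1, ?_, ?_⟩
  · -- Part 2
    intro i hi
    have hle : Submodule.span ℝ {v} ≤ LinearMap.ker (α i).linear := by
      rw [Submodule.span_le, Set.singleton_subset_iff]
      exact LinearMap.mem_ker.mpr hi
    set L := (Submodule.span ℝ {v}).liftQ (α i).linear hle with hL
    refine ⟨{ toFun := fun y => L y + α i 0, linear := L,
              map_vadd' := by
                intro q w
                simp only [vadd_eq_add, map_add]
                ring }, ?_, ?_⟩
    · intro x
      show L ((Submodule.span ℝ {v}).mkQ x) + α i 0 = α i x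
      rw [Submodule.mkQ_apply, Submodule.liftQ_apply]
      exact (hα i x).symm
    · intro β' hβ'
      ext y
      obtain ⟨x, rfl⟩ := Submodule.mkQ_surjective _ y
      rw [hβ' x]
      show α i x = L ((Submodule.span ℝ {v}).mkQ x) + α i 0
      rw [Submodule.mkQ_apply, Submodule.liftQ_apply]
      exact hα i x
  · -- Part 3
    intro β hβ
    apply Set.Subset.antisymm
    · rintro _ ⟨x, hx, rfl⟩ i hi
      rw [hβ i hi x]
      rw [hPv] at hx
      exact hx.1 i
    · intro y hy
      obtain ⟨x, rfl⟩ := Submodule.mkQ_surjective _ y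
      rw [part1]
      refine ⟨x, fun i hi => ?_, rfl⟩
      have := hy i hi
      rwa [hβ i hi x] at this
end
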